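/- For every integer m ≥ 2, the polynomial identity T^{m-1} = 1 + ∑_{j=2}^{m} s^m_j · (T-1)(T-2)⋯(T-j+1)/j! holds in ℚ[T], where s^m_j is the number of surjections from {1,...,m} onto {1,...,j}. -/

import Mathlib

open Polynomial

/-- `s^m_j`: the number of surjective maps from an `m`-element set onto a `j`-element set. -/
def surjCount (m j : ℕ) : ℕ :=
  Fintype.card {f : Fin m → Fin j // Function.Surjective f}

lemma surjCount_eq_zero_of_lt {m j : ℕ} (h : m < j) : surjCount m j = 0 := by
  rw [surjCount, Fintype.card_eq_zero_iff]
  constructor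
  rintro ⟨f, hf⟩
  have := Fintype.card_le_of_surjective f hf
  simp at this
  omega

lemma surjCount_zero {m : ℕ} (h : 0 < m) : surjCount m 0 = 0 := by
  rw [surjCount, Fintype.card_eq_zero_iff]
  constructor
  rintro ⟨f, -⟩
  exact (f ⟨0, h⟩).elim0

lemma surjCount_one {m : ℕ} (h : 0 < m) : surjCount m 1 = 1 := by
  rw [surjCount, Fintype.card_eq_one_iff]
  refine ⟨⟨fun _ => 0, fun y => ⟨⟨0, h⟩, Subsingleton.elim _ _⟩⟩, ?_⟩
  rintro ⟨f, hf⟩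
  exact Subtype.ext (funext fun i => Subsingleton.elim _ _)

lemma card_fiber (m n : ℕ) (S : Finset (Fin n)) :
    Fintype.card {f : Fin m → Fin n // Finset.image f Finset.univ = S} = surjCount m S.card := by
  rw [surjCount]
  refine Fintype.card_congr ?_
  refine
    { toFun := fun p => ⟨fun i => S.equivFin ⟨p.1 i, by
        have := Finset.mem_image_of_mem p.1 (Finset.mem_univ i); rwa [p.2] at this⟩, ?_⟩
      invFun := fun g => ⟨fun i => ((S.equivFin.symm (g.1 i)) : Fin n), ?_⟩
      left_inv := ?_
      right_inv := ?_ }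
  · intro k
    have hx : (S.equivFin.symm k : Fin n) ∈ Finset.image p.1 Finset.univ := by
      rw [p.2]; exact (S.equivFin.symm k).2
    obtain ⟨i, -, hi⟩ := Finset.mem_image.1 hx
    refine ⟨i, ?_⟩
    rw [Equiv.apply_eq_iff_eq_symm_apply]
    exact Subtype.ext hi
  · apply Finset.ext
    intro x
    simp only [Finset.mem_image, Finset.mem_univ, true_and]
    constructor
    · rintro ⟨i, rfl⟩; exact (S.equivFin.symm (g.1 i)).2
    · intro hx
      obtain ⟨i, hi⟩ := g.2 (S.equivFin ⟨x, hx⟩)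
      exact ⟨i, by rw [hi, Equiv.symm_apply_apply]⟩
  · rintro ⟨f, hf⟩
    refine Subtype.ext (funext fun i => ?_)
    simp
  · rintro ⟨g, hg⟩
    refine Subtype.ext (funext fun i => ?_)
    simp

lemma key (m n : ℕ) :
    n ^ m = ∑ j ∈ Finset.range (n + 1), n.choose j * surjCount m j := by
  have h1 : n ^ m = Fintype.card (Fin m → Fin n) := by simp
  rw [h1,
    ← Fintype.card_congr (Equiv.sigmaFiberEquiv
      (fun f : Fin m → Fin n => Finset.image f Finset.univ)),
    Fintype.card_sigma]
  simp_rw [card_fiber]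
  rw [← Finset.sum_fiberwise_of_maps_to (g := Finset.card) (t := Finset.range (n + 1))
    (fun S _ => Finset.mem_range.2 (Nat.lt_succ_of_le (by simpa using S.card_le_univ)))]
  refine Finset.sum_congr rfl fun j hj => ?_
  have h2 : Finset.univ.filter (fun S : Finset (Fin n) => S.card = j)
      = Finset.powersetCard j Finset.univ := by
    rw [Finset.powersetCard_eq_filter, Finset.powerset_univ]
  calc ∑ S ∈ Finset.univ.filter (fun S : Finset (Fin n) => S.card = j), surjCount m S.card
      = ∑ S ∈ Finset.univ.filter (fun S : Finset (Fin n) => S.card = j), surjCount m j := by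
        refine Finset.sum_congr rfl fun S hS => ?_
        rw [(Finset.mem_filter.1 hS).2]
    _ = n.choose j * surjCount m j := by
        rw [Finset.sum_const, h2, Finset.card_powersetCard, Finset.card_univ, Fintype.card_fin,
          smul_eq_mul]

lemma key2 (m n : ℕ) :
    n ^ m = ∑ j ∈ Finset.range (m + 1), n.choose j * surjCount m j := by
  rw [key m n]
  set N := max m n + 1 with hN
  rw [Finset.sum_subset (Finset.range_subset_range.2 (by omega) :
      Finset.range (n+1) ⊆ Finset.range N)
    (fun j _ hj => by
      rw [Nat.choose_eq_zero_of_lt (by simp only [Finset.mem_range] at *; omega), zero_mul]),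
    Finset.sum_subset (Finset.range_subset_range.2 (by omega) :
      Finset.range (m+1) ⊆ Finset.range N)
    (fun j _ hj => by
      rw [surjCount_eq_zero_of_lt (by simp only [Finset.mem_range] at *; omega), mul_zero])]

lemma poly_key (m : ℕ) :
    (X : ℚ[X]) ^ m = ∑ j ∈ Finset.range (m + 1),
      C ((surjCount m j : ℚ) / (Nat.factorial j : ℚ)) * descPochhammer ℚ j := by
  apply Polynomial.eq_of_infinite_eval_eq
  apply Set.Infinite.mono (s := Set.range ((↑) : ℕ → ℚ))
  · rintro _ ⟨n, rfl⟩
    simp only [Set.mem_setOf_eq, eval_pow, eval_X, eval_finset_sum, eval_mul, eval_C,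
      descPochhammer_eval_eq_descFactorial]
    have hcast : ((n : ℚ)) ^ m
        = ∑ j ∈ Finset.range (m + 1), (n.choose j : ℚ) * (surjCount m j : ℚ) := by
      exact_mod_cast congrArg (Nat.cast : ℕ → ℚ) (key2 m n)
    rw [hcast]
    refine Finset.sum_congr rfl fun j _ => ?_
    rw [Nat.descFactorial_eq_factorial_mul_choose]
    have hj : (Nat.factorial j : ℚ) ≠ 0 := by positivity
    push_cast
    field_simp
  · exact Set.infinite_range_of_injective Nat.cast_injective

lemma descPochhammer_eq_prod (j : ℕ) (hj : 1 ≤ j) :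
    descPochhammer ℚ j = X * ∏ i ∈ Finset.Icc 1 (j - 1), (X - C (i : ℚ)) := by
  have h : ∀ k : ℕ, descPochhammer ℚ k = ∏ i ∈ Finset.range k, (X - C (i : ℚ)) := by
    intro k
    induction k with
    | zero => simp [descPochhammer_zero]
    | succ k ih =>
      rw [descPochhammer_succ_right, ih, Finset.prod_range_succ]
      norm_cast
  rw [h]
  obtain ⟨j, rfl⟩ : ∃ k, j = k + 1 := ⟨j - 1, by omega⟩
  rw [Finset.prod_range_succ', Nat.add_sub_cancel, ← Finset.Ico_add_one_right_eq_Icc,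
    Finset.prod_Ico_eq_prod_range]
  rw [mul_comm]
  congr 1
  · simp
  · refine Finset.prod_congr rfl fun i _ => ?_
    congr 2
    push_cast
    ring

/-- For every integer `m ≥ 2`, in `ℚ[T]` one has
`T^{m-1} = 1 + ∑_{j=2}^{m} s^m_j · (T-1)(T-2)⋯(T-j+1)/j!`. -/
theorem pow_pred_eq_one_add_sum (m : ℕ) (hm : 2 ≤ m) :
    (X : ℚ[X]) ^ (m - 1) =
      1 + ∑ j ∈ Finset.Icc 2 m,
        C ((surjCount m j : ℚ) / (Nat.factorial j : ℚ)) *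
          ∏ i ∈ Finset.Icc 1 (j - 1), (X - C (i : ℚ)) := by
  apply mul_left_cancel₀ (X_ne_zero : (X : ℚ[X]) ≠ 0)
  have hXm : (X : ℚ[X]) * X ^ (m - 1) = X ^ m := by
    rw [← pow_succ']
    congr 1
    omega
  rw [hXm, poly_key m]
  have hset : Finset.range (m + 1) = insert 0 (insert 1 (Finset.Icc 2 m)) := by
    ext x
    simp only [Finset.mem_range, Finset.mem_insert, Finset.mem_Icc]
    omega
  rw [hset, Finset.sum_insert (by simp), Finset.sum_insert (by simp)]
  rw [surjCount_zero (by omega), surjCount_one (by omega)]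
  simp only [Nat.cast_zero, Nat.cast_one, Nat.factorial_one, zero_div, map_zero, zero_mul,
    zero_add, descPochhammer_one, Nat.cast_one, one_div]
  rw [mul_add, mul_one]
  congr 1
  · simp
  · rw [Finset.mul_sum]
    refine Finset.sum_congr rfl fun j hj => ?_
    rw [descPochhammer_eq_prod j (by simp only [Finset.mem_Icc] at hj; omega)]
    ring
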